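/- Let h : [0,T] → ℝᴺ be (p+1)-times weakly differentiable with h^{(p+1)} ∈ L², let b, c ∈ ℝˢ with 0 ≤ c_i ≤ 1 define a quadrature satisfying the order conditions Σ_i b_i c_i^{k−1} = 1/k for k = 1,…,p, and let on a uniform grid t_k = kτ, R_k := τ Σ_i b_i ∫_{t_{k−1}}^{t_{k−1}+τ c_i} ((t_{k−1}+τ c_i − s)^{p−1}/(p−1)!) h^{(p+1)}(s) ds and R̃_k := ∫_{t_{k−1}}^{t_k} ((t_k − s)^p / p!) h^{(p+1)}(s) ds. Then |Σ_{k=1}^j (R_k − R̃_k)|² ≤ C · t_j · τ^{2p} ∫₀^{t_j} |h^{(p+1)}(s)|² ds, where C depends only on b, c, p. -/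

import Mathlib

open MeasureTheory intervalIntegral

lemma cs_aux (T : ℝ) (hT : 0 ≤ T) (g : ℝ → ℝ)
    (hg : IntervalIntegrable g volume 0 T)
    (hg2 : IntervalIntegrable (fun x => g x ^ 2) volume 0 T) :
    (∫ x in (0:ℝ)..T, g x) ^ 2 ≤ T * ∫ x in (0:ℝ)..T, g x ^ 2 := by
  rcases hT.eq_or_lt with h | hT'
  · simp [← h]
  set I := ∫ x in (0:ℝ)..T, g x with hI
  set G := ∫ x in (0:ℝ)..T, g x ^ 2 with hG
  set M := I / T with hM
  have h1 : IntervalIntegrable (fun x => (2*M) * g x) volume 0 T := hg.const_mul _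
  have h2 : ∫ x in (0:ℝ)..T, ((g x)^2 - (2*M)*g x + M^2) = G - (2*M)*I + M^2*T := by
    rw [intervalIntegral.integral_add (hg2.sub h1) intervalIntegrable_const,
      intervalIntegral.integral_sub hg2 h1, intervalIntegral.integral_const_mul,
      intervalIntegral.integral_const]
    simp [smul_eq_mul]
    ring
  have h3 : 0 ≤ G - (2*M)*I + M^2*T := by
    rw [← h2]
    apply intervalIntegral.integral_nonneg hT
    intro u _
    nlinarith [sq_nonneg (g u - M)]
  have hMT : M * T = I := div_mul_cancel₀ I hT'.ne'
  have h5 : M^2*T = M*I := by rw [sq, mul_assoc, hMT]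
  have h4 : M * I ≤ G := by linarith
  rw [hM] at h4
  rw [div_mul_eq_mul_div, div_le_iff₀ hT'] at h4
  nlinarith

lemma norm_weighted_integral_le {E : Type*} [NormedAddCommGroup E] [NormedSpace ℝ E]
    (a t u : ℝ) (hat : a ≤ t) (htu : t ≤ u)
    (f : ℝ → E) (hf : ∀ x y, IntervalIntegrable f volume x y)
    (w : ℝ → ℝ) (hw : Continuous w) (Mw : ℝ) (hMw0 : 0 ≤ Mw)
    (hMw : ∀ x ∈ Set.Icc a t, |w x| ≤ Mw) :
    ‖∫ x in a..t, w x • f x‖ ≤ Mw * ∫ x in a..u, ‖f x‖ := by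
  calc ‖∫ x in a..t, w x • f x‖ ≤ ∫ x in a..t, ‖w x • f x‖ :=
        intervalIntegral.norm_integral_le_integral_norm hat
    _ = ∫ x in a..t, |w x| * ‖f x‖ := by
        simp_rw [norm_smul, Real.norm_eq_abs]
    _ ≤ ∫ x in a..t, Mw * ‖f x‖ := by
        apply intervalIntegral.integral_mono_on hat
        · exact ((hf a t).norm.continuousOn_mul (hw.abs.continuousOn))
        · exact (hf a t).norm.const_mul _
        · intro x hx
          exact mul_le_mul_of_nonneg_right (hMw x hx) (norm_nonneg _)
    _ = Mw * ∫ x in a..t, ‖f x‖ := intervalIntegral.integral_const_mul _ _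
    _ ≤ Mw * ∫ x in a..u, ‖f x‖ := by
        apply mul_le_mul_of_nonneg_left _ hMw0
        apply intervalIntegral.integral_mono_interval le_rfl hat htu
        · exact Filter.Eventually.of_forall fun x => norm_nonneg _
        · exact (hf a u).norm

set_option maxHeartbeats 1000000 in
/-- Accumulated Runge–Kutta quadrature-remainder estimate: for a quadrature
`(b, c)` with `0 ≤ cᵢ ≤ 1` satisfying the order conditions up to order `p`,
there is `C = C(b, c, p) > 0` such that on every uniform grid `t_k = kτ` the
accumulated Taylor remainders satisfy
`|Σ_{k=1}^j (R_k − R̃_k)|² ≤ C t_j τ^{2p} ∫₀^{t_j} |h^{(p+1)}|²`. -/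
theorem runge_kutta_remainder_accumulation
    (s p : ℕ) (hp : 1 ≤ p) (b c : Fin s → ℝ)
    (hc : ∀ i, 0 ≤ c i ∧ c i ≤ 1)
    (horder : ∀ k : ℕ, 1 ≤ k → k ≤ p → ∑ i, b i * c i ^ (k - 1) = 1 / (k : ℝ)) :
    ∃ C > (0 : ℝ), ∀ (N : ℕ) (hp1 : ℝ → EuclideanSpace ℝ (Fin N)) (τ : ℝ), 0 < τ →
      ∀ j : ℕ,
      (∀ x y : ℝ, IntervalIntegrable hp1 MeasureTheory.volume x y) →
      IntervalIntegrable (fun x => ‖hp1 x‖ ^ 2) MeasureTheory.volume 0 ((j : ℝ) * τ) →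
      ‖∑ k ∈ Finset.Icc 1 j,
          ((τ • ∑ i, b i •
              ∫ x in (((k : ℝ) - 1) * τ)..(((k : ℝ) - 1) * τ + τ * c i),
                (((((k : ℝ) - 1) * τ + τ * c i - x) ^ (p - 1) / (p - 1).factorial : ℝ)
                  • hp1 x))
            - ∫ x in (((k : ℝ) - 1) * τ)..((k : ℝ) * τ),
                ((((k : ℝ) * τ - x) ^ p / p.factorial : ℝ) • hp1 x))‖ ^ 2
        ≤ C * ((j : ℝ) * τ) * τ ^ (2 * p) * ∫ x in (0 : ℝ)..((j : ℝ) * τ), ‖hp1 x‖ ^ 2 := by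
  classical
  set B : ℝ := ∑ i, |b i| with hBdef
  have hB : 0 ≤ B := Finset.sum_nonneg fun i _ => abs_nonneg _
  set K : ℝ := B / (p-1).factorial + 1 / p.factorial with hKdef
  have hK : 0 < K := by
    have h1 : (0:ℝ) < 1 / p.factorial := by positivity
    have h2 : (0:ℝ) ≤ B / (p-1).factorial := by positivity
    have := add_pos_of_nonneg_of_pos h2 h1
    rw [← hKdef] at this
    exact this
  refine ⟨K^2, by positivity, ?_⟩
  intro N f τ hτ j hint hint2
  set T : ℝ := (j:ℝ) * τ with hTdef
  have hT : 0 ≤ T := by positivity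
  -- per-interval bound
  have h2 : ∀ k ∈ Finset.Icc 1 j,
      ‖(τ • ∑ i, b i •
          ∫ x in (((k : ℝ) - 1) * τ)..(((k : ℝ) - 1) * τ + τ * c i),
            (((((k : ℝ) - 1) * τ + τ * c i - x) ^ (p - 1) / (p - 1).factorial : ℝ) • f x))
        - ∫ x in (((k : ℝ) - 1) * τ)..((k : ℝ) * τ),
            ((((k : ℝ) * τ - x) ^ p / p.factorial : ℝ) • f x)‖
      ≤ (τ^p * K) * ∫ x in (((k : ℝ) - 1) * τ)..((k : ℝ) * τ), ‖f x‖ := by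
    intro k _
    set a : ℝ := ((k:ℝ) - 1) * τ with hadef
    have hend : (k:ℝ) * τ = a + τ := by rw [hadef]; ring
    have hIg : (0:ℝ) ≤ ∫ x in a..(a+τ), ‖f x‖ :=
      intervalIntegral.integral_nonneg (by linarith) (fun u _ => norm_nonneg _)
    have hbound1 : ∀ i, ‖∫ x in a..(a + τ * c i),
        (((a + τ * c i - x) ^ (p - 1) / (p - 1).factorial : ℝ) • f x)‖
        ≤ (τ^(p-1) / (p-1).factorial) * ∫ x in a..(a+τ), ‖f x‖ := by
      intro i
      have hci := hc i
      apply norm_weighted_integral_le a (a + τ * c i) (a + τ)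
        (by nlinarith [hci.1]) (by nlinarith [hci.2]) f hint
      · continuity
      · positivity
      · intro x hx
        have h0 : 0 ≤ a + τ * c i - x := by linarith [hx.2]
        have h1 : a + τ * c i - x ≤ τ := by nlinarith [hx.1, hci.2]
        rw [abs_div, abs_pow, abs_of_nonneg h0,
          abs_of_nonneg (by positivity : (0:ℝ) ≤ ((p-1).factorial : ℝ))]
        gcongr
    have hbound2 : ‖∫ x in a..((k:ℝ)*τ), ((((k:ℝ)*τ - x) ^ p / p.factorial : ℝ) • f x)‖
        ≤ (τ^p / p.factorial) * ∫ x in a..(a+τ), ‖f x‖ := by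
      rw [hend]
      apply norm_weighted_integral_le a (a+τ) (a+τ) (by linarith) le_rfl f hint
      · continuity
      · positivity
      · intro x hx
        have h0 : 0 ≤ a + τ - x := by linarith [hx.2]
        have h1 : a + τ - x ≤ τ := by linarith [hx.1]
        rw [abs_div, abs_pow, abs_of_nonneg h0,
          abs_of_nonneg (by positivity : (0:ℝ) ≤ (p.factorial : ℝ))]
        gcongr
    have hsum : ‖∑ i, b i • ∫ x in a..(a + τ * c i),
          (((a + τ * c i - x) ^ (p - 1) / (p - 1).factorial : ℝ) • f x)‖
        ≤ B * ((τ^(p-1) / (p-1).factorial) * ∫ x in a..(a+τ), ‖f x‖) := by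
      calc _ ≤ ∑ i, ‖b i • ∫ x in a..(a + τ * c i),
            (((a + τ * c i - x) ^ (p - 1) / (p - 1).factorial : ℝ) • f x)‖ :=
            norm_sum_le _ _
        _ ≤ ∑ i : Fin s, |b i| * ((τ^(p-1) / (p-1).factorial) * ∫ x in a..(a+τ), ‖f x‖) := by
            apply Finset.sum_le_sum
            intro i _
            rw [norm_smul, Real.norm_eq_abs]
            exact mul_le_mul_of_nonneg_left (hbound1 i) (abs_nonneg _)
        _ = B * ((τ^(p-1) / (p-1).factorial) * ∫ x in a..(a+τ), ‖f x‖) := by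
            rw [hBdef, Finset.sum_mul]
    calc ‖(τ • ∑ i, b i • ∫ x in a..(a + τ * c i),
            (((a + τ * c i - x) ^ (p - 1) / (p - 1).factorial : ℝ) • f x))
          - ∫ x in a..((k:ℝ)*τ), ((((k:ℝ)*τ - x) ^ p / p.factorial : ℝ) • f x)‖
        ≤ ‖τ • ∑ i, b i • ∫ x in a..(a + τ * c i),
            (((a + τ * c i - x) ^ (p - 1) / (p - 1).factorial : ℝ) • f x)‖
          + ‖∫ x in a..((k:ℝ)*τ), ((((k:ℝ)*τ - x) ^ p / p.factorial : ℝ) • f x)‖ :=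
          norm_sub_le _ _
      _ ≤ τ * (B * ((τ^(p-1) / (p-1).factorial) * ∫ x in a..(a+τ), ‖f x‖))
          + (τ^p / p.factorial) * ∫ x in a..(a+τ), ‖f x‖ := by
          apply add_le_add _ hbound2
          rw [norm_smul, Real.norm_eq_abs, abs_of_pos hτ]
          exact mul_le_mul_of_nonneg_left hsum hτ.le
      _ = (τ * τ^(p-1)) * (B / (p-1).factorial) * (∫ x in a..(a+τ), ‖f x‖)
            + τ^p * (1 / p.factorial) * (∫ x in a..(a+τ), ‖f x‖) := by ring
      _ = (τ^p * K) * ∫ x in a..(a+τ), ‖f x‖ := by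
          have hτp : τ * τ^(p-1) = τ^p := by
            rw [← pow_succ']
            congr 1
            omega
          rw [hτp, hKdef]
          ring
      _ = (τ^p * K) * ∫ x in a..((k:ℝ)*τ), ‖f x‖ := by rw [hend]
  -- telescoping sum
  have h3 : ∑ k ∈ Finset.Icc 1 j, (∫ x in (((k : ℝ) - 1) * τ)..((k : ℝ) * τ), ‖f x‖)
      = ∫ x in (0:ℝ)..T, ‖f x‖ := by
    have := intervalIntegral.sum_integral_adjacent_intervals
      (f := fun x => ‖f x‖) (μ := volume) (a := fun i => (i:ℝ) * τ) (n := j)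
      (fun k _ => (hint _ _).norm)
    simp only [Nat.cast_zero, zero_mul] at this
    rw [hTdef, ← this]
    rw [show Finset.Icc 1 j = Finset.Ico 1 (j+1) by rw [Finset.Ico_add_one_right_eq_Icc],
      Finset.sum_Ico_eq_sum_range]
    simp only [Nat.add_sub_cancel]
    apply Finset.sum_congr rfl
    intro i _
    have e1 : ((1+i:ℕ):ℝ) - 1 = (i:ℝ) := by push_cast; ring
    have e2 : ((1+i:ℕ):ℝ) = ((i+1:ℕ):ℝ) := by push_cast; ring
    rw [e1, e2]
  have L1 : ‖∑ k ∈ Finset.Icc 1 j,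
      ((τ • ∑ i, b i •
          ∫ x in (((k : ℝ) - 1) * τ)..(((k : ℝ) - 1) * τ + τ * c i),
            (((((k : ℝ) - 1) * τ + τ * c i - x) ^ (p - 1) / (p - 1).factorial : ℝ) • f x))
        - ∫ x in (((k : ℝ) - 1) * τ)..((k : ℝ) * τ),
            ((((k : ℝ) * τ - x) ^ p / p.factorial : ℝ) • f x))‖
      ≤ (τ^p * K) * ∫ x in (0:ℝ)..T, ‖f x‖ := by
    calc _ ≤ ∑ k ∈ Finset.Icc 1 j, ‖(τ • ∑ i, b i •
          ∫ x in (((k : ℝ) - 1) * τ)..(((k : ℝ) - 1) * τ + τ * c i),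
            (((((k : ℝ) - 1) * τ + τ * c i - x) ^ (p - 1) / (p - 1).factorial : ℝ) • f x))
        - ∫ x in (((k : ℝ) - 1) * τ)..((k : ℝ) * τ),
            ((((k : ℝ) * τ - x) ^ p / p.factorial : ℝ) • f x)‖ := norm_sum_le _ _
      _ ≤ ∑ k ∈ Finset.Icc 1 j,
          (τ^p * K) * ∫ x in (((k : ℝ) - 1) * τ)..((k : ℝ) * τ), ‖f x‖ :=
          Finset.sum_le_sum h2
      _ = (τ^p * K) * ∫ x in (0:ℝ)..T, ‖f x‖ := by rw [← Finset.mul_sum, h3]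
  have hcs : (∫ x in (0:ℝ)..T, ‖f x‖) ^ 2 ≤ T * ∫ x in (0:ℝ)..T, ‖f x‖ ^ 2 :=
    cs_aux T hT _ (hint 0 T).norm hint2
  have L2 := pow_le_pow_left₀ (norm_nonneg _) L1 2
  calc ‖∑ k ∈ Finset.Icc 1 j, _‖^2 ≤ ((τ^p * K) * ∫ x in (0:ℝ)..T, ‖f x‖)^2 := L2
    _ = K^2 * τ^(2*p) * (∫ x in (0:ℝ)..T, ‖f x‖)^2 := by
        rw [mul_comm 2 p, pow_mul]
        ring
    _ ≤ K^2 * τ^(2*p) * (T * ∫ x in (0:ℝ)..T, ‖f x‖^2) := by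
        apply mul_le_mul_of_nonneg_left hcs (by positivity)
    _ = K^2 * T * τ^(2*p) * ∫ x in (0:ℝ)..T, ‖f x‖^2 := by ring
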